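/- Fix ω ∈ [2,3] and γ := ω − 2. The maximum, over all edge-dominated polymatroids h on the triangle hypergraph (vertex set {X, Y, Z}, hyperedges {X,Y}, {Y,Z}, {X,Z}), of min( h({X,Y,Z}), max( h({X}) + h({Y}) + γ·h({Z}), h({X}) + γ·h({Y}) + h({Z}), γ·h({X}) + h({Y}) + h({Z}) ) ) equals 2ω/(ω+1). In particular, the ω-submodular width of the triangle (3-clique) query equals 2ω/(ω+1). -/

import Mathlib

open Finset

/-- A polymatroid on a finite vertex type `V`. -/
def IsPolymatroid {V : Type*} [DecidableEq V] [Fintype V] (h : Finset V → ℝ) : Prop :=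
  h ∅ = 0 ∧ (∀ A : Finset V, 0 ≤ h A) ∧
    (∀ A B : Finset V, A ⊆ B → h A ≤ h B) ∧
    (∀ A B : Finset V, h (A ∪ B) + h (A ∩ B) ≤ h A + h B)

private noncomputable def gg (ω : ℝ) (n : ℕ) : ℝ :=
  if n = 0 then 0 else if n = 1 then 2/(ω+1) else if n = 2 then 1 else 2*ω/(ω+1)

lemma gg_mono (ω : ℝ) (hω₂ : 2 ≤ ω) (hω₃ : ω ≤ 3) {n m : ℕ} (hnm : n ≤ m) (hm : m ≤ 3) :
    gg ω n ≤ gg ω m := by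
  have hpos : (0:ℝ) < ω + 1 := by linarith
  have h1 : (0:ℝ) ≤ 2/(ω+1) := by positivity
  have h2 : 2/(ω+1) ≤ 1 := by rw [div_le_one hpos]; linarith
  have h3 : (1:ℝ) ≤ 2*ω/(ω+1) := by rw [le_div_iff₀ hpos]; linarith
  interval_cases m <;> interval_cases n <;> simp [gg] <;> linarith

lemma gg_sub (ω : ℝ) (hω₂ : 2 ≤ ω) (hω₃ : ω ≤ 3) {i a b u : ℕ}
    (hia : i ≤ a) (hib : i ≤ b) (hau : a ≤ u) (hbu : b ≤ u) (hsum : i + u = a + b)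
    (hu : u ≤ 3) : gg ω u + gg ω i ≤ gg ω a + gg ω b := by
  have hpos : (0:ℝ) < ω + 1 := by linarith
  have hA : (1:ℝ) ≤ 2/(ω+1) + 2/(ω+1) := by rw [← add_div, le_div_iff₀ hpos]; linarith
  have hB : 2*ω/(ω+1) ≤ 2/(ω+1) + 1 := by
    rw [div_add' _ _ _ (ne_of_gt hpos), div_le_div_iff₀ hpos hpos]; nlinarith
  have hC : 2*ω/(ω+1) + 2/(ω+1) ≤ 2 := by
    rw [← add_div, div_le_iff₀ hpos]; linarith
  interval_cases u <;> interval_cases a <;> interval_cases b <;> interval_cases i <;>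
    simp_all [gg] <;> linarith

theorem omega_subw_triangle (ω : ℝ) (hω₂ : 2 ≤ ω) (hω₃ : ω ≤ 3) :
    IsGreatest
      {x : ℝ | ∃ h : Finset (Fin 3) → ℝ, IsPolymatroid h ∧
        h {0, 1} ≤ 1 ∧ h {1, 2} ≤ 1 ∧ h {0, 2} ≤ 1 ∧
        x = min (h {0, 1, 2})
          (max (max (h {0} + h {1} + (ω - 2) * h {2})
                    (h {0} + (ω - 2) * h {1} + h {2}))
               ((ω - 2) * h {0} + h {1} + h {2}))}
      (2 * ω / (ω + 1)) := by
  have hpos : (0:ℝ) < ω + 1 := by linarith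
  constructor
  · -- membership
    refine ⟨fun A => gg ω A.card, ⟨?_, ?_, ?_, ?_⟩, ?_, ?_, ?_, ?_⟩
    · simp [gg]
    · intro A
      have := gg_mono ω hω₂ hω₃ (Nat.zero_le A.card)
        (le_trans (card_le_univ A) (by simp))
      simpa [gg] using this
    · intro A B hAB
      exact gg_mono ω hω₂ hω₃ (card_le_card hAB) (le_trans (card_le_univ B) (by simp))
    · intro A B
      exact gg_sub ω hω₂ hω₃ (card_le_card inter_subset_left)
        (card_le_card inter_subset_right) (card_le_card subset_union_left)
        (card_le_card subset_union_right)
        (by rw [Nat.add_comm]; exact card_union_add_card_inter A B)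
        (le_trans (card_le_univ _) (by simp))
    · show gg ω (card {0,1}) ≤ 1
      rw [show ({0,1} : Finset (Fin 3)).card = 2 from by decide]
      simp [gg]
    · show gg ω (card {1,2}) ≤ 1
      rw [show ({1,2} : Finset (Fin 3)).card = 2 from by decide]
      simp [gg]
    · show gg ω (card {0,2}) ≤ 1
      rw [show ({0,2} : Finset (Fin 3)).card = 2 from by decide]
      simp [gg]
    · show (2*ω/(ω+1) : ℝ) = min (gg ω (card {0,1,2}))
        (max (max (gg ω (card {0}) + gg ω (card {1}) + (ω-2) * gg ω (card {2}))
          (gg ω (card {0}) + (ω-2) * gg ω (card {1}) + gg ω (card {2})))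
          ((ω-2) * gg ω (card {0}) + gg ω (card {1}) + gg ω (card {2})))
      rw [show ({0,1,2} : Finset (Fin 3)).card = 3 from by decide,
        show ({0} : Finset (Fin 3)).card = 1 from by decide,
        show ({1} : Finset (Fin 3)).card = 1 from by decide,
        show ({2} : Finset (Fin 3)).card = 1 from by decide]
      have hg1 : gg ω 1 = 2/(ω+1) := by norm_num [gg]
      have hg3 : gg ω 3 = 2*ω/(ω+1) := by norm_num [gg]
      rw [hg1, hg3]
      have hc1 : 2/(ω+1) + 2/(ω+1) + (ω-2) * (2/(ω+1)) = 2*ω/(ω+1) := by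
        field_simp; ring
      have hc2 : 2/(ω+1) + (ω-2) * (2/(ω+1)) + 2/(ω+1) = 2*ω/(ω+1) := by
        field_simp; ring
      have hc3 : (ω-2) * (2/(ω+1)) + 2/(ω+1) + 2/(ω+1) = 2*ω/(ω+1) := by
        field_simp; ring
      rw [hc1, hc2, hc3, max_self, max_self, min_self]
  · -- upper bound
    rintro x ⟨h, ⟨h0, hnn, hmono, hsub⟩, e1, e2, e3, rfl⟩
    have c1 : h {0,1,2} + h {0} ≤ 2 := by
      have hs := hsub {0,1} {0,2}
      have hu : ({0,1} ∪ {0,2} : Finset (Fin 3)) = {0,1,2} := by decide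
      have hi : ({0,1} ∩ {0,2} : Finset (Fin 3)) = {0} := by decide
      rw [hu, hi] at hs; linarith
    have c2 : h {0,1,2} + h {1} ≤ 2 := by
      have hs := hsub {0,1} {1,2}
      have hu : ({0,1} ∪ {1,2} : Finset (Fin 3)) = {0,1,2} := by decide
      have hi : ({0,1} ∩ {1,2} : Finset (Fin 3)) = {1} := by decide
      rw [hu, hi] at hs; linarith
    have c3 : h {0,1,2} + h {2} ≤ 2 := by
      have hs := hsub {0,2} {1,2}
      have hu : ({0,2} ∪ {1,2} : Finset (Fin 3)) = {0,1,2} := by decide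
      have hi : ({0,2} ∩ {1,2} : Finset (Fin 3)) = {2} := by decide
      rw [hu, hi] at hs; linarith
    set f := h {0,1,2}
    set L1 := h {0} + h {1} + (ω - 2) * h {2}
    set L2 := h {0} + (ω - 2) * h {1} + h {2}
    set L3 := (ω - 2) * h {0} + h {1} + h {2}
    set M := max (max L1 L2) L3 with hM
    set m := min f M with hm
    have hmf : m ≤ f := min_le_left _ _
    have hmM : m ≤ M := min_le_right _ _
    have hγ : (0:ℝ) ≤ ω - 2 := by linarith
    have hgm : (ω - 2) * m ≤ (ω - 2) * f := mul_le_mul_of_nonneg_left hmf hγ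
    rw [le_div_iff₀ hpos]
    have hMc : M = L1 ∨ M = L2 ∨ M = L3 := by
      rcases max_choice (max L1 L2) L3 with h' | h'
      · rcases max_choice L1 L2 with h'' | h''
        · exact Or.inl (by rw [hM, h', h''])
        · exact Or.inr (Or.inl (by rw [hM, h', h'']))
      · exact Or.inr (Or.inr (by rw [hM, h']))
    have p1 : (ω-2) * f + (ω-2) * h {0} ≤ (ω-2) * 2 := by
      have := mul_le_mul_of_nonneg_left c1 hγ
      linarith [mul_add (ω-2) f (h {0})]
    have p2 : (ω-2) * f + (ω-2) * h {1} ≤ (ω-2) * 2 := by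
      have := mul_le_mul_of_nonneg_left c2 hγ
      linarith [mul_add (ω-2) f (h {1})]
    have p3 : (ω-2) * f + (ω-2) * h {2} ≤ (ω-2) * 2 := by
      have := mul_le_mul_of_nonneg_left c3 hγ
      linarith [mul_add (ω-2) f (h {2})]
    have expand : m * (ω + 1) = 3 * m + (ω-2) * m := by ring
    have hL1 : L1 = h {0} + h {1} + (ω-2) * h {2} := rfl
    have hL2 : L2 = h {0} + (ω-2) * h {1} + h {2} := rfl
    have hL3 : L3 = (ω-2) * h {0} + h {1} + h {2} := rfl
    rcases hMc with hc | hc | hc <;> rw [hc] at hmM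
    · linarith [expand, hL1, hgm, c1, c2, p3, hmf, hmM]
    · linarith [expand, hL2, hgm, c1, c3, p2, hmf, hmM]
    · linarith [expand, hL3, hgm, c2, c3, p1, hmf, hmM]
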